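/- arXiv:2201.05783 — 4 statements merged into one kernel-verified Lean document; each statement's English description precedes it below -/
import Mathlib

section
/- A non-empty graph G has strict bramble number at most 1 if and only if G is acyclic (a forest). -/
open SimpleGraph

section Defs

variable {V W : Type}

/-- `X` covers the family `B`: every member of `B` meets `X`. -/
def Covers (X : Set V) (B : Set (Set V)) : Prop := ∀ S ∈ B, (S ∩ X).Nonempty

/-- A strict bramble: a family of connected vertex sets, pairwise intersecting. -/
def IsStrictBramble (G : SimpleGraph V) (B : Set (Set V)) : Prop :=
  (∀ S ∈ B, (G.induce S).Connected) ∧ ∀ S ∈ B, ∀ S' ∈ B, (S ∩ S').Nonempty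

/-- Two vertex sets touch: they intersect or are joined by an edge. -/
def Touches (G : SimpleGraph V) (S S' : Set V) : Prop :=
  (S ∩ S').Nonempty ∨ ∃ u ∈ S, ∃ v ∈ S', G.Adj u v

/-- A bramble: a family of connected vertex sets, pairwise touching. -/
def IsBramble (G : SimpleGraph V) (B : Set (Set V)) : Prop :=
  (∀ S ∈ B, (G.induce S).Connected) ∧ ∀ S ∈ B, ∀ S' ∈ B, Touches G S S'

/-- The order of a family of vertex sets: minimum size of a covering set. -/
noncomputable def brOrder (B : Set (Set V)) : ℕ :=
  sInf {n | ∃ X : Set V, Covers X B ∧ X.ncard = n}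

/-- The strict bramble number. -/
noncomputable def sbn (G : SimpleGraph V) : ℕ :=
  sSup {n | ∃ B, IsStrictBramble G B ∧ brOrder B = n}

/-- The bramble number. -/
noncomputable def bn (G : SimpleGraph V) : ℕ :=
  sSup {n | ∃ B, IsBramble G B ∧ brOrder B = n}

/-- `S` is an `(x,y)`-separator: `x, y ∉ S` and `x, y` lie in different
components of `G − S`. -/
def SepPair (G : SimpleGraph V) (x y : V) (S : Set V) : Prop :=
  x ∉ S ∧ y ∉ S ∧ ∀ (hx : x ∈ Sᶜ) (hy : y ∈ Sᶜ),
    ¬ (G.induce Sᶜ).Reachable ⟨x, hx⟩ ⟨y, hy⟩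

/-- `S` is an `(X,Y)`-separator of `G`. -/
def IsSetSeparator (G : SimpleGraph V) (X Y S : Set V) : Prop :=
  ∀ x ∈ X \ S, ∀ y ∈ Y \ S, SepPair G x y S

/-- A lenient tree decomposition of `G`. -/
structure LenientTD (G : SimpleGraph V) where
  ι : Type
  T : SimpleGraph ι
  tree : T.IsTree
  χ : ι → Set V
  covers : ∀ v : V, ∃ t, v ∈ χ t
  edge_mem : ∀ u v : V, G.Adj u v →
    ∃ t t', (t = t' ∨ T.Adj t t') ∧ u ∈ χ t ∪ χ t' ∧ v ∈ χ t ∪ χ t'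
  trace_conn : ∀ v : V, (T.induce {t | v ∈ χ t}).Connected

/-- The width of a lenient tree decomposition is at most `k`. -/
def LenientTD.WidthLE {G : SimpleGraph V} (D : LenientTD G) (k : ℕ) : Prop :=
  ∀ t, (D.χ t).ncard ≤ k

/-- An ordinary tree decomposition of `G`. -/
structure TreeDecomp (G : SimpleGraph V) where
  ι : Type
  T : SimpleGraph ι
  tree : T.IsTree
  χ : ι → Set V
  covers : ∀ v : V, ∃ t, v ∈ χ t
  edge_mem : ∀ u v : V, G.Adj u v → ∃ t, u ∈ χ t ∧ v ∈ χ t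
  trace_conn : ∀ v : V, (T.induce {t | v ∈ χ t}).Connected

/-- Treewidth: minimum over tree decompositions of (max bag size − 1). -/
noncomputable def tw (G : SimpleGraph V) : ℕ :=
  sInf {k | ∃ D : TreeDecomp G, ∀ t, (D.χ t).ncard ≤ k + 1}

/-- A minor model of `H` in `G`. -/
def IsMinorModel (H : SimpleGraph W) (G : SimpleGraph V) (μ : W → Set V) : Prop :=
  (∀ w, (G.induce (μ w)).Connected) ∧
  (∀ w w', w ≠ w' → μ w ∩ μ w' = ∅) ∧
  (∀ w w', H.Adj w w' → ∃ u ∈ μ w, ∃ v ∈ μ w', G.Adj u v)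

/-- `H` is a minor of `G`. -/
def IsMinorOf (H : SimpleGraph W) (G : SimpleGraph V) : Prop :=
  ∃ μ : W → Set V, IsMinorModel H G μ

/-- The lexicographic product `T · K_k`. -/
def lexK {ι : Type} (T : SimpleGraph ι) (k : ℕ) : SimpleGraph (ι × Fin k) where
  Adj a b := T.Adj a.1 b.1 ∨ (a.1 = b.1 ∧ a.2 ≠ b.2)
  symm := ⟨by
    rintro a b (h | ⟨h1, h2⟩)
    · exact Or.inl h.symm
    · exact Or.inr ⟨h1.symm, h2.symm⟩⟩
  loopless := ⟨by
    rintro a (h | ⟨_, h2⟩)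
    · exact T.loopless.irrefl _ h
    · exact h2 rfl⟩

/-- The lexicographic tree product number. -/
noncomputable def ltp (G : SimpleGraph V) : ℕ :=
  sInf {m | ∃ (ι : Type) (T : SimpleGraph ι), T.IsTree ∧ IsMinorOf G (lexK T m)}

/-- The `(T,χ)`-completion of `G`: make each union of two close bags a clique. -/
def LenientTD.completion {G : SimpleGraph V} (D : LenientTD G) : SimpleGraph V where
  Adj u v := u ≠ v ∧ ∃ t t', (t = t' ∨ D.T.Adj t t') ∧
    u ∈ D.χ t ∪ D.χ t' ∧ v ∈ D.χ t ∪ D.χ t'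
  symm := ⟨by
    rintro u v ⟨hne, t, t', hc, hu, hv⟩
    exact ⟨hne.symm, t, t', hc, hv, hu⟩⟩
  loopless := ⟨fun u h => h.1 rfl⟩

/-- `G` is chordal: every cycle of length at least four has a chord. -/
def IsChordal (G : SimpleGraph V) : Prop :=
  ∀ (v : V) (w : G.Walk v v), w.IsCycle → 4 ≤ w.length →
    ∃ x ∈ w.support, ∃ y ∈ w.support, G.Adj x y ∧ s(x, y) ∉ w.edges

end Defs

section Aux

open SimpleGraph Walk

variable {V : Type} {G : SimpleGraph V}

lemma reach_induce {S : Set V} : ∀ {u v : V} (w : G.Walk u v), (∀ z ∈ w.support, z ∈ S) →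
    ∀ (hu : u ∈ S) (hv : v ∈ S), (G.induce S).Reachable ⟨u, hu⟩ ⟨v, hv⟩ := by
  intro u v w
  induction w with
  | nil => intro _ hu hv; exact Reachable.refl _
  | @cons u x v h p ih =>
    intro hsup hu hv
    have hx : x ∈ S := hsup x (by simp)
    have hadj : (G.induce S).Adj ⟨u, hu⟩ ⟨x, hx⟩ := h
    exact (hadj.reachable).trans (ih (fun z hz => hsup z (by simp [hz])) hx hv)

lemma exists_path_in {S : Set V} (hS : (G.induce S).Connected) {u v : V}
    (hu : u ∈ S) (hv : v ∈ S) :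
    ∃ p : G.Walk u v, p.IsPath ∧ ∀ z ∈ p.support, z ∈ S := by
  classical
  obtain ⟨W⟩ := hS.preconnected ⟨u, hu⟩ ⟨v, hv⟩
  let w : G.Walk u v := W.map (Embedding.induce S).toHom
  have hsupp : ∀ z ∈ w.support, z ∈ S := by
    intro z hz
    rw [show w.support = W.support.map (Embedding.induce S).toHom from Walk.support_map _ _,
      List.mem_map] at hz
    obtain ⟨a, _, rfl⟩ := hz
    exact a.2
  exact ⟨w.bypass, w.bypass_isPath, fun z hz => hsupp z (w.support_bypass_subset hz)⟩

lemma path_support_subset (hG : G.IsAcyclic) {S : Set V} (hS : (G.induce S).Connected)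
    {u v : V} (hu : u ∈ S) (hv : v ∈ S) {p : G.Walk u v} (hp : p.IsPath) :
    ∀ z ∈ p.support, z ∈ S := by
  obtain ⟨q, hq, hqS⟩ := exists_path_in hS hu hv
  have hpq : p = q := Subtype.mk_eq_mk.mp (hG.path_unique ⟨p, hp⟩ ⟨q, hq⟩)
  intro z hz
  exact hqS z (hpq ▸ hz)

lemma exists_first_mem {T : Set V} : ∀ {x y : V} (w : G.Walk x y), y ∈ T →
    ∃ (m : V) (_ : m ∈ T) (w1 : G.Walk x m) (w2 : G.Walk m y),
      w = w1.append w2 ∧ ∀ z ∈ w1.support, z ∈ T → z = m := by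
  intro x y w
  induction w with
  | nil =>
    intro hy
    exact ⟨_, hy, Walk.nil, Walk.nil, rfl, by intro z hz _; simpa using hz⟩
  | @cons u x' v h p ih =>
    intro hy
    by_cases hu : u ∈ T
    · exact ⟨u, hu, Walk.nil, Walk.cons h p, rfl, by intro z hz _; simpa using hz⟩
    · obtain ⟨m, hm, w1, w2, heq, hlast⟩ := ih hy
      refine ⟨m, hm, Walk.cons h w1, w2, by rw [Walk.cons_append, ← heq], ?_⟩
      intro z hz hzT
      rw [Walk.support_cons, List.mem_cons] at hz
      rcases hz with rfl | hz
      · exact absurd hzT hu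
      · exact hlast z hz hzT

lemma median (hG : G.IsAcyclic) {a b c : V} (p : G.Walk a b) (hp : p.IsPath)
    (r : G.Walk a c) (hr : r.IsPath) (q : G.Walk b c) (hq : q.IsPath) :
    ∃ m, m ∈ p.support ∧ m ∈ r.support ∧ m ∈ q.support := by
  classical
  obtain ⟨m, hm, w1, w2, heq, hlast⟩ :=
    exists_first_mem (T := {z | z ∈ r.support}) p.reverse (by simp)
  have hmw1 : m ∈ w1.support := w1.end_mem_support
  have hmp : m ∈ p.support := by
    have : m ∈ p.reverse.support := by
      rw [heq, Walk.support_append]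
      exact List.mem_append_left _ hmw1
    rwa [Walk.support_reverse, List.mem_reverse] at this
  have hw1 : w1.IsPath := by
    have : (w1.append w2).IsPath := heq ▸ hp.reverse
    exact this.of_append_left
  set r2 := r.dropUntil m hm with hr2def
  have hr2 : r2.IsPath := hr.dropUntil hm
  have hr2sub : ∀ z ∈ r2.support, z ∈ r.support := fun z hz => r.support_dropUntil_subset hm hz
  -- W : G.Walk b c
  have hW : (w1.append r2).IsPath := by
    rw [Walk.isPath_def, Walk.support_append, List.nodup_append]
    refine ⟨hw1.support_nodup, hr2.support_nodup.tail, ?_⟩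
    intro z hz1 z' hz2 hzz'
    subst hzz'
    have hz2' : z ∈ r2.support := List.mem_of_mem_tail hz2
    have hzm : z = m := hlast z hz1 (hr2sub z hz2')
    subst hzm
    have : r2.support = z :: r2.support.tail := r2.support_eq_cons
    have hnd := hr2.support_nodup
    rw [this] at hnd
    exact (List.nodup_cons.mp hnd).1 hz2
  have hWq : w1.append r2 = q := Subtype.mk_eq_mk.mp (hG.path_unique ⟨w1.append r2, hW⟩ ⟨q, hq⟩)
  have hmq : m ∈ q.support := by
    rw [← hWq, Walk.support_append]
    exact List.mem_append_left _ hmw1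
  exact ⟨m, hmp, hm, hmq⟩

lemma helly3 (hG : G.IsAcyclic) {S1 S2 S3 : Set V}
    (h1 : (G.induce S1).Connected) (h2 : (G.induce S2).Connected)
    (h3 : (G.induce S3).Connected)
    (h12 : (S1 ∩ S2).Nonempty) (h13 : (S1 ∩ S3).Nonempty) (h23 : (S2 ∩ S3).Nonempty) :
    (S1 ∩ S2 ∩ S3).Nonempty := by
  obtain ⟨a, ha1, ha2⟩ := h12
  obtain ⟨b, hb1, hb3⟩ := h13
  obtain ⟨c, hc2, hc3⟩ := h23
  obtain ⟨p, hp, hpS⟩ := exists_path_in h1 ha1 hb1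
  obtain ⟨r, hr, hrS⟩ := exists_path_in h2 ha2 hc2
  obtain ⟨q, hq, hqS⟩ := exists_path_in h3 hb3 hc3
  obtain ⟨m, hmp, hmr, hmq⟩ := median hG p hp r hr q hq
  exact ⟨m, ⟨hpS m hmp, hrS m hmr⟩, hqS m hmq⟩

lemma inter_connected (hG : G.IsAcyclic) {S1 S2 : Set V}
    (h1 : (G.induce S1).Connected) (h2 : (G.induce S2).Connected)
    (h12 : (S1 ∩ S2).Nonempty) : (G.induce (S1 ∩ S2)).Connected := by
  obtain ⟨x, hx⟩ := h12
  haveI : Nonempty ↑(S1 ∩ S2) := ⟨⟨x, hx⟩⟩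
  constructor
  rintro ⟨u, hu⟩ ⟨v, hv⟩
  obtain ⟨p, hp, hpS⟩ := exists_path_in h1 hu.1 hv.1
  have hpS2 : ∀ z ∈ p.support, z ∈ S2 := path_support_subset hG h2 hu.2 hv.2 hp
  exact reach_induce (S := S1 ∩ S2) p (fun z hz => ⟨hpS z hz, hpS2 z hz⟩) hu hv

lemma helly [Finite V] (hG : G.IsAcyclic) :
    ∀ (n : ℕ) (B : Set (Set V)), B.ncard = n → B.Nonempty →
    (∀ S ∈ B, (G.induce S).Connected) → (∀ S ∈ B, ∀ S' ∈ B, (S ∩ S').Nonempty) →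
    ∃ x, ∀ S ∈ B, x ∈ S := by
  intro n
  induction n using Nat.strong_induction_on with
  | _ n ih =>
    intro B hcard hne hconn hint
    by_cases hsub : ∃ S1 ∈ B, ∃ S2 ∈ B, S1 ≠ S2
    · obtain ⟨S1, hS1, S2, hS2, hne12⟩ := hsub
      have hc12 : (G.induce (S1 ∩ S2)).Connected :=
        inter_connected hG (hconn S1 hS1) (hconn S2 hS2) (hint S1 hS1 S2 hS2)
      set B' : Set (Set V) := insert (S1 ∩ S2) (B \ {S1, S2}) with hB'def
      have hfin : B.Finite := Set.toFinite B
      have hn2 : 2 ≤ n := by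
        have h1 : 1 < B.ncard := (Set.one_lt_ncard_iff hfin).mpr ⟨S1, S2, hS1, hS2, hne12⟩
        omega
      have hcard' : B'.ncard < n := by
        have h1 : B'.ncard ≤ (B \ {S1, S2}).ncard + 1 := Set.ncard_insert_le _ _
        have hsub2 : ({S1, S2} : Set (Set V)) ⊆ B := by
          intro S hS; rcases hS with rfl | hS
          · exact hS1
          · simp only [Set.mem_singleton_iff] at hS; exact hS ▸ hS2
        have h2 : (B \ {S1, S2}).ncard = B.ncard - ({S1, S2} : Set (Set V)).ncard :=
          Set.ncard_diff hsub2 (Set.toFinite _)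
        have h3 : ({S1, S2} : Set (Set V)).ncard = 2 := Set.ncard_pair hne12
        omega
      have hconn' : ∀ S ∈ B', (G.induce S).Connected := by
        intro S hS
        rcases hS with rfl | hS
        · exact hc12
        · exact hconn S hS.1
      have hint' : ∀ S ∈ B', ∀ S' ∈ B', (S ∩ S').Nonempty := by
        have key : ∀ T ∈ B, ((S1 ∩ S2) ∩ T).Nonempty := by
          intro T hT
          exact helly3 hG (hconn S1 hS1) (hconn S2 hS2) (hconn T hT)
            (hint S1 hS1 S2 hS2) (hint S1 hS1 T hT) (hint S2 hS2 T hT)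
        intro S hS S' hS'
        rcases hS with rfl | hS <;> rcases hS' with rfl | hS'
        · simpa using hint S1 hS1 S2 hS2
        · exact key S' hS'.1
        · obtain ⟨x, hx1, hx2⟩ := key S hS.1
          exact ⟨x, hx2, hx1⟩
        · exact hint S hS.1 S' hS'.1
      obtain ⟨x, hx⟩ := ih B'.ncard hcard' B' rfl ⟨_, Set.mem_insert _ _⟩ hconn' hint'
      have hx12 : x ∈ S1 ∩ S2 := hx _ (Set.mem_insert _ _)
      refine ⟨x, fun S hS => ?_⟩
      by_cases h1 : S = S1
      · exact h1 ▸ hx12.1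
      by_cases h2 : S = S2
      · exact h2 ▸ hx12.2
      · exact hx S (Set.mem_insert_of_mem _ ⟨hS, by simp [h1, h2]⟩)
    · push_neg at hsub
      obtain ⟨S0, hS0⟩ := hne
      obtain ⟨x, hx, _⟩ := hint S0 hS0 S0 hS0
      exact ⟨x, fun S hS => (hsub S hS S0 hS0) ▸ hx⟩

lemma walk_support_connected {u v : V} (w : G.Walk u v) :
    (G.induce {z | z ∈ w.support}).Connected := by
  classical
  haveI : Nonempty ↑{z | z ∈ w.support} := ⟨⟨u, w.start_mem_support⟩⟩
  constructor
  rintro ⟨a, ha⟩ ⟨b, hb⟩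
  have ra := reach_induce (S := {z | z ∈ w.support}) (w.takeUntil a ha)
    (fun z hz => w.support_takeUntil_subset ha hz) w.start_mem_support ha
  have rb := reach_induce (S := {z | z ∈ w.support}) (w.takeUntil b hb)
    (fun z hz => w.support_takeUntil_subset hb hz) w.start_mem_support hb
  exact ra.symm.trans rb

end Aux


section Cyc

open SimpleGraph Walk

variable {V : Type} {G : SimpleGraph V}

lemma rotate_support_set [DecidableEq V] {x y : V} (c : G.Walk x x) (hy : y ∈ c.support) :
    {z | z ∈ (c.rotate y hy).support} = {z | z ∈ c.support} := by
  classical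
  ext v
  simp only [Set.mem_setOf_eq]
  constructor
  · intro h
    unfold Walk.rotate at h
    rw [Walk.support_append, List.mem_append] at h
    rcases h with h | h
    · exact c.support_dropUntil_subset hy h
    · exact c.support_takeUntil_subset hy (List.mem_of_mem_tail h)
  · intro h
    unfold Walk.rotate
    rw [Walk.support_append, List.mem_append]
    have h2 : v ∈ ((c.takeUntil y hy).append (c.dropUntil y hy)).support := by
      rw [c.take_spec hy]; exact h
    rw [Walk.support_append, List.mem_append] at h2
    rcases h2 with h2 | h2
    · rw [Walk.mem_support_iff] at h2
      rcases h2 with rfl | h2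
      · exact Or.inl (c.dropUntil y hy).end_mem_support
      · exact Or.inr h2
    · exact Or.inl (List.mem_of_mem_tail h2)

lemma cycle_remove [DecidableEq V] {x y : V} {c : G.Walk x x} (hc : c.IsCycle) (hy : y ∈ c.support) :
    ∃ (a b : V) (q : G.Walk a b), q.IsPath ∧
      {z | z ∈ q.support} = {z | z ∈ c.support} \ {y} := by
  classical
  have hc' : (c.rotate y hy).IsCycle := hc.rotate hy
  have hss := rotate_support_set c hy
  cases hcc : c.rotate y hy with
  | nil =>
    rw [hcc] at hc'
    exact absurd hc'.three_le_length (by simp)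
  | @cons _ w _ h p =>
    rw [hcc] at hc' hss
    rw [Walk.cons_isCycle_iff] at hc'
    obtain ⟨hp, -⟩ := hc'
    have hs1 : {z | z ∈ (Walk.cons h p).support} = {z | z ∈ p.support} := by
      ext v
      simp only [Set.mem_setOf_eq, Walk.support_cons, List.mem_cons]
      constructor
      · rintro (rfl | hv)
        · exact p.end_mem_support
        · exact hv
      · exact Or.inr
    cases hpr : p.reverse with
    | nil => exact absurd h (by simp)
    | @cons _ w' _ h' q =>
      have hq : q.IsPath := by
        have : p.reverse.IsPath := hp.reverse
        rw [hpr] at this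
        exact this.of_cons
      have hynq : y ∉ q.support := by
        have : p.reverse.IsPath := hp.reverse
        rw [hpr] at this
        rw [Walk.isPath_def, Walk.support_cons, List.nodup_cons] at this
        exact this.1
      have hs2 : {z | z ∈ q.support} = {z | z ∈ p.support} \ {y} := by
        have hps : ∀ v, v ∈ p.support ↔ v ∈ p.reverse.support := by
          intro v; rw [Walk.support_reverse, List.mem_reverse]
        ext v
        simp only [Set.mem_setOf_eq, Set.mem_diff, Set.mem_singleton_iff]
        constructor
        · intro hv
          refine ⟨?_, ?_⟩
          · rw [hps, hpr, Walk.support_cons]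
            exact List.mem_cons_of_mem _ hv
          · rintro rfl; exact hynq hv
        · rintro ⟨hv, hvy⟩
          rw [hps, hpr, Walk.support_cons, List.mem_cons] at hv
          rcases hv with rfl | hv
          · exact absurd rfl hvy
          · exact hv
      exact ⟨w', w, q, hq, by rw [hs2, ← hs1, hss]⟩

lemma cycle_card [Finite V] {x : V} {c : G.Walk x x} (hc : c.IsCycle) :
    3 ≤ {z | z ∈ c.support}.ncard := by
  classical
  have h1 : {z | z ∈ c.support.tail} ⊆ {z | z ∈ c.support} :=
    fun z hz => List.mem_of_mem_tail hz
  have h2 : {z | z ∈ c.support.tail}.ncard = c.support.tail.length := by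
    rw [show {z | z ∈ c.support.tail} = ↑c.support.tail.toFinset by
        ext z; simp, Set.ncard_coe_finset, List.toFinset_card_of_nodup hc.support_nodup]
  have h3 : c.support.tail.length = c.length := by
    have := c.length_support
    have := List.length_tail (l := c.support)
    omega
  have h4 := Set.ncard_le_ncard h1 (Set.toFinite _)
  have h5 := hc.three_le_length
  omega

end Cyc

/-- a non-empty graph has `sbn ≤ 1` iff it is acyclic. -/
theorem sbn_le_one_iff_isAcyclic {V : Type} [Fintype V] [Nonempty V]
    (G : SimpleGraph V) : sbn G ≤ 1 ↔ G.IsAcyclic := by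
  classical
  have hbdd : BddAbove {n | ∃ B, IsStrictBramble G B ∧ brOrder B = n} := by
    refine ⟨(Set.univ : Set V).ncard, ?_⟩
    rintro n ⟨B, hB, rfl⟩
    apply Nat.sInf_le
    refine ⟨Set.univ, ?_, rfl⟩
    intro S hS
    obtain ⟨x, hx, -⟩ := hB.2 S hS S hS
    exact ⟨x, hx, Set.mem_univ x⟩
  have hbr_empty : brOrder (∅ : Set (Set V)) = 0 := by
    apply Nat.le_zero.mp
    apply Nat.sInf_le
    exact ⟨∅, fun S hS => absurd hS (Set.notMem_empty S), Set.ncard_empty _⟩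
  have hsb_empty : IsStrictBramble G (∅ : Set (Set V)) :=
    ⟨fun S hS => absurd hS (Set.notMem_empty S),
     fun S hS => absurd hS (Set.notMem_empty S)⟩
  constructor
  · -- sbn ≤ 1 → acyclic
    intro hle
    by_contra hcyc
    simp only [SimpleGraph.isAcyclic_iff_path_unique] at hcyc
    have hcyc' : ∃ (x : V) (c : G.Walk x x), c.IsCycle := by
      by_contra hno
      push_neg at hno
      exact hcyc (SimpleGraph.isAcyclic_iff_path_unique.mp (fun v c => hno v c))
    obtain ⟨x, c, hc⟩ := hcyc'
    set C : Set V := {z | z ∈ c.support} with hCdef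
    have hC3 : 3 ≤ C.ncard := cycle_card hc
    set B : Set (Set V) := {S | ∃ y ∈ C, S = C \ {y}} with hBdef
    have hprops : ∀ y ∈ C, (G.induce (C \ {y})).Connected ∧ (C \ {y}).Nonempty := by
      intro y hy
      obtain ⟨a, b, q, hq, hqs⟩ := cycle_remove hc hy
      constructor
      · rw [hCdef, ← hqs]; exact walk_support_connected q
      · rw [hCdef, ← hqs]; exact ⟨a, q.start_mem_support⟩
    have hSB : IsStrictBramble G B := by
      constructor
      · rintro S ⟨y, hy, rfl⟩; exact (hprops y hy).1
      · rintro S ⟨y, hy, rfl⟩ S' ⟨y', hy', rfl⟩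
        by_contra hemp
        rw [Set.not_nonempty_iff_eq_empty] at hemp
        have hsub : C ⊆ {y, y'} := by
          intro z hz
          by_contra hzz
          simp only [Set.mem_insert_iff, Set.mem_singleton_iff, not_or] at hzz
          have : z ∈ (C \ {y}) ∩ (C \ {y'}) :=
            ⟨⟨hz, fun h => hzz.1 h⟩, hz, fun h => hzz.2 h⟩
          rw [hemp] at this
          exact this
        have hle2 := Set.ncard_le_ncard hsub (Set.toFinite _)
        have h2 : ({y, y'} : Set V).ncard ≤ 2 :=
          (Set.ncard_insert_le _ _).trans (by simp)
        omega
    have hCne : C.Nonempty := Set.nonempty_of_ncard_ne_zero (by omega)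
    obtain ⟨y0, hy0⟩ := hCne
    have horder : 2 ≤ brOrder B := by
      have hOne : (Set.univ : Set V).ncard ∈
          {n | ∃ X : Set V, Covers X B ∧ X.ncard = n} := by
        refine ⟨Set.univ, ?_, rfl⟩
        rintro S ⟨y, hy, rfl⟩
        obtain ⟨z, hz⟩ := (hprops y hy).2
        exact ⟨z, hz, Set.mem_univ z⟩
      have hmem : brOrder B ∈ {n | ∃ X : Set V, Covers X B ∧ X.ncard = n} :=
        Nat.sInf_mem ⟨_, hOne⟩
      obtain ⟨X, hX, hXcard⟩ := hmem
      by_contra hlt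
      push_neg at hlt
      interval_cases h : (brOrder B)
      · have hXe : X = ∅ := (Set.ncard_eq_zero (Set.toFinite X)).mp hXcard
        obtain ⟨z, -, hz2⟩ := hX (C \ {y0}) ⟨y0, hy0, rfl⟩
        rw [hXe] at hz2
        exact hz2
      · obtain ⟨w, rfl⟩ := Set.ncard_eq_one.mp hXcard
        by_cases hwC : w ∈ C
        · obtain ⟨z, hz1, hz2⟩ := hX (C \ {w}) ⟨w, hwC, rfl⟩
          rw [Set.mem_singleton_iff] at hz2
          subst hz2
          exact hz1.2 rfl
        · obtain ⟨z, hz1, hz2⟩ := hX (C \ {y0}) ⟨y0, hy0, rfl⟩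
          rw [Set.mem_singleton_iff] at hz2
          subst hz2
          exact hwC hz1.1
    have h2sbn : brOrder B ≤ sbn G := le_csSup hbdd ⟨B, hSB, rfl⟩
    omega
  · -- acyclic → sbn ≤ 1
    intro hG
    apply csSup_le
    · exact ⟨0, ∅, hsb_empty, hbr_empty⟩
    · rintro n ⟨B, hB, rfl⟩
      by_cases hne : B.Nonempty
      · obtain ⟨x, hx⟩ := helly hG B.ncard B rfl hne hB.1 hB.2
        apply Nat.sInf_le
        exact ⟨{x}, fun S hS => ⟨x, hx S hS, rfl⟩, Set.ncard_singleton x⟩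
      · rw [Set.not_nonempty_iff_eq_empty] at hne
        subst hne
        rw [hbr_empty]
        omega
end

section
/- If G and H are graphs with H a minor of G, and G has a lenient tree decomposition of width at most k, then H has a lenient tree decomposition of width at most k. -/
open SimpleGraph

/-- lenient tree decompositions of width at most `k` are inherited
by minors. -/
theorem lenientTD_minor_closed {V W : Type} [Fintype V] [Fintype W]
    (G : SimpleGraph V) (H : SimpleGraph W) (hm : IsMinorOf H G) (k : ℕ)
    (hG : ∃ D : LenientTD G, D.WidthLE k) :
    ∃ D : LenientTD H, D.WidthLE k := by
  classical
  obtain ⟨μ, hconn, hdisj, hadjm⟩ := hm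
  obtain ⟨D, hwid⟩ := hG
  have hne : ∀ w : W, (μ w).Nonempty := fun w => by
    obtain ⟨⟨x, hx⟩⟩ := (hconn w).nonempty
    exact ⟨x, hx⟩
  refine ⟨⟨D.ι, D.T, D.tree, fun t => {w | (μ w ∩ D.χ t).Nonempty}, ?_, ?_, ?_⟩, ?_⟩
  · intro w
    obtain ⟨x, hx⟩ := hne w
    obtain ⟨t, ht⟩ := D.covers x
    exact ⟨t, x, hx, ht⟩
  · intro w w' hww'
    obtain ⟨u, hu, v, hv, huv⟩ := hadjm w w' hww'
    obtain ⟨t, t', hc, hu', hv'⟩ := D.edge_mem u v huv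
    refine ⟨t, t', hc, ?_, ?_⟩
    · rcases hu' with h | h
      · exact Or.inl ⟨u, hu, h⟩
      · exact Or.inr ⟨u, hu, h⟩
    · rcases hv' with h | h
      · exact Or.inl ⟨v, hv, h⟩
      · exact Or.inr ⟨v, hv, h⟩
  · intro w
    set S : Set D.ι := {t | w ∈ {w | (μ w ∩ D.χ t).Nonempty}} with hS
    have hmemS : ∀ {x : V} {t : D.ι}, x ∈ μ w → x ∈ D.χ t → t ∈ S :=
      fun hx ht => ⟨_, hx, ht⟩
    -- A: two nodes containing the same x ∈ μ w are reachable in induce S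
    have hA : ∀ (x : V) (hx : x ∈ μ w) (t1 t2 : D.ι) (h1 : x ∈ D.χ t1)
        (h2 : x ∈ D.χ t2),
        (D.T.induce S).Reachable ⟨t1, hmemS hx h1⟩ ⟨t2, hmemS hx h2⟩ := by
      intro x hx t1 t2 h1 h2
      have hsub : {t : D.ι | x ∈ D.χ t} ⊆ S := fun t ht => hmemS hx ht
      have hr := (D.trace_conn x).preconnected ⟨t1, h1⟩ ⟨t2, h2⟩
      exact hr.map (⟨fun a => ⟨a.1, hsub a.2⟩, fun hab => hab⟩ :
        (D.T.induce {t : D.ι | x ∈ D.χ t}) →g (D.T.induce S))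
    -- B: edge step
    have hB : ∀ (x y : V) (hx : x ∈ μ w) (hy : y ∈ μ w), G.Adj x y →
        ∀ (t1 t2 : D.ι) (h1 : x ∈ D.χ t1) (h2 : y ∈ D.χ t2),
        (D.T.induce S).Reachable ⟨t1, hmemS hx h1⟩ ⟨t2, hmemS hy h2⟩ := by
      intro x y hx hy hxy t1 t2 h1 h2
      obtain ⟨t, t', hc, hx', hy'⟩ := D.edge_mem x y hxy
      rcases hx' with hxt | hxt <;> rcases hy' with hyt | hyt
      · exact (hA x hx t1 t h1 hxt).trans (hA y hy t t2 hyt h2)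
      · refine (hA x hx t1 t h1 hxt).trans (Reachable.trans ?_ (hA y hy t' t2 hyt h2))
        rcases hc with rfl | hc
        · exact Reachable.refl _
        · exact SimpleGraph.Adj.reachable (by exact hc :
            (D.T.induce S).Adj ⟨t, hmemS hx hxt⟩ ⟨t', hmemS hy hyt⟩)
      · refine (hA x hx t1 t' h1 hxt).trans (Reachable.trans ?_ (hA y hy t t2 hyt h2))
        rcases hc with rfl | hc
        · exact Reachable.refl _
        · exact SimpleGraph.Adj.reachable (by exact hc.symm :
            (D.T.induce S).Adj ⟨t', hmemS hx hxt⟩ ⟨t, hmemS hy hyt⟩)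
      · exact (hA x hx t1 t' h1 hxt).trans (hA y hy t' t2 hyt h2)
    -- C: walk induction
    have hC : ∀ (a b : ↥(μ w)) (p : (G.induce (μ w)).Walk a b)
        (t1 t2 : D.ι) (h1 : a.1 ∈ D.χ t1) (h2 : b.1 ∈ D.χ t2),
        (D.T.induce S).Reachable ⟨t1, hmemS a.2 h1⟩ ⟨t2, hmemS b.2 h2⟩ := by
      intro a b p
      induction p with
      | @nil u => intro t1 t2 h1 h2; exact hA u.1 u.2 t1 t2 h1 h2
      | @cons u v c h p ih =>
        intro t1 t2 h1 h2
        obtain ⟨tc, htc⟩ := D.covers v.1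
        exact (hB u.1 v.1 u.2 v.2 h t1 tc h1 htc).trans (ih tc t2 htc h2)
    rw [SimpleGraph.connected_iff]
    constructor
    · intro a b
      obtain ⟨x1, hx1, hxt1⟩ := a.2
      obtain ⟨x2, hx2, hxt2⟩ := b.2
      obtain ⟨p⟩ := (hconn w).preconnected ⟨x1, hx1⟩ ⟨x2, hx2⟩
      exact hC ⟨x1, hx1⟩ ⟨x2, hx2⟩ p a.1 b.1 hxt1 hxt2
    · obtain ⟨x, hx⟩ := hne w
      obtain ⟨t, ht⟩ := D.covers x
      exact ⟨⟨t, hmemS hx ht⟩⟩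
  · intro t
    refine le_trans ?_ (hwid t)
    by_cases hE : {w | (μ w ∩ D.χ t).Nonempty} = ∅
    · simp [hE]
    · obtain ⟨w0, hw0⟩ := Set.nonempty_iff_ne_empty.2 hE
      refine Set.ncard_le_ncard_of_injOn
        (fun w => if h : (μ w ∩ D.χ t).Nonempty then h.choose else hw0.choose) ?_ ?_
        (Set.toFinite _)
      · intro w hwS
        simp only [Set.mem_setOf_eq] at hwS
        simp only [dif_pos hwS]
        exact hwS.choose_spec.2
      · intro w1 h1 w2 h2 heq
        simp only [Set.mem_setOf_eq] at h1 h2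
        simp only [dif_pos h1, dif_pos h2] at heq
        by_contra hne12
        have := hdisj w1 w2 hne12
        have : h1.choose ∈ μ w1 ∩ μ w2 :=
          ⟨h1.choose_spec.1, heq ▸ h2.choose_spec.1⟩
        rw [hdisj w1 w2 hne12] at this
        exact this
end

section
/- For every graph G and k ∈ ℕ, G has a lenient tree decomposition of width at most k if and only if there exists a tree T such that G is a minor of the lexicographic product T · K_k. -/
open SimpleGraph

private lemma reach_map' {A B : Type} {G : SimpleGraph A} {H : SimpleGraph B}
    {S : Set A} {S' : Set B} (f : A → B) (hf : ∀ a ∈ S, f a ∈ S')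
    (hadj : ∀ a ∈ S, ∀ b ∈ S, G.Adj a b → f a = f b ∨ H.Adj (f a) (f b)) :
    ∀ {x y : S}, (G.induce S).Walk x y →
      (H.induce S').Reachable ⟨f x, hf x x.2⟩ ⟨f y, hf y y.2⟩ := by
  intro x y w
  induction w with
  | nil => exact Reachable.refl _
  | @cons a b c h p ih =>
    rcases hadj a a.2 b b.2 h with heq | hH
    · have he : (⟨f a, hf a a.2⟩ : S') = ⟨f b, hf b b.2⟩ := Subtype.ext heq
      rw [he]; exact ih
    · exact (Adj.reachable (by exact hH : (H.induce S').Adj ⟨f a, hf a a.2⟩ ⟨f b, hf b b.2⟩)).trans ih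

private lemma connected_map' {A B : Type} {G : SimpleGraph A} {H : SimpleGraph B}
    {S : Set A} {S' : Set B} (f : A → B) (hf : ∀ a ∈ S, f a ∈ S')
    (hadj : ∀ a ∈ S, ∀ b ∈ S, G.Adj a b → f a = f b ∨ H.Adj (f a) (f b))
    (hsurj : ∀ b ∈ S', ∃ a ∈ S, f a = b)
    (hconn : (G.induce S).Connected) : (H.induce S').Connected := by
  rw [connected_iff]
  obtain ⟨⟨a0, ha0⟩⟩ := hconn.nonempty
  refine ⟨?_, ⟨⟨f a0, hf a0 ha0⟩⟩⟩
  rintro ⟨x, hx⟩ ⟨y, hy⟩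
  obtain ⟨a, ha, rfl⟩ := hsurj x hx
  obtain ⟨b, hb, rfl⟩ := hsurj y hy
  obtain ⟨w⟩ := hconn.preconnected ⟨a, ha⟩ ⟨b, hb⟩
  exact reach_map' f hf hadj w

private lemma exists_injOn_fin' {V : Type} [Fintype V] (S : Set V) (k : ℕ) (hk : 0 < k)
    (h : S.ncard ≤ k) : ∃ f : V → Fin k, Set.InjOn f S := by
  classical
  have hfin : S.Finite := Set.toFinite S
  have : Fintype S := hfin.fintype
  have hcard : Fintype.card S ≤ Fintype.card (Fin k) := by
    rw [Fintype.card_fin]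
    rwa [Set.ncard_eq_toFinset_card', Set.toFinset_card] at h
    -- might mismatch; fix later
  obtain ⟨g⟩ := Function.Embedding.nonempty_of_card_le hcard
  refine ⟨fun v => if hv : v ∈ S then g ⟨v, hv⟩ else ⟨0, hk⟩, ?_⟩
  intro a ha b hb hab
  simp only [dif_pos ha, dif_pos hb] at hab
  exact Subtype.ext_iff.mp (g.injective hab)

/-- `G` has a lenient tree decomposition of width at most `k` iff
`G` is a minor of `T · K_k` for some tree `T`. -/
theorem lenientTD_iff_minor_lexK {V : Type} [Fintype V] (G : SimpleGraph V)
    (k : ℕ) :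
    (∃ D : LenientTD G, D.WidthLE k) ↔
      ∃ (ι : Type) (T : SimpleGraph ι), T.IsTree ∧ IsMinorOf G (lexK T k) := by

  classical
  constructor
  · rintro ⟨D, hw⟩
    rcases isEmpty_or_nonempty V with hV | hV
    · refine ⟨Unit, ⊥, ?_, fun v => isEmptyElim v, fun v => isEmptyElim v,
        fun v => isEmptyElim v, fun v w h => isEmptyElim v⟩
      constructor
      · rw [connected_iff]
        exact ⟨fun a b => Subsingleton.elim a b ▸ Reachable.refl a, ⟨()⟩⟩
      · intro v c hc
        cases c with
        | nil => exact hc.ne_nil rfl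
        | cons h _ => exact h.elim
    · have hk : 0 < k := by
        obtain ⟨v⟩ := hV
        obtain ⟨t, ht⟩ := D.covers v
        exact lt_of_lt_of_le ((Set.ncard_pos (Set.toFinite _)).mpr ⟨v, ht⟩) (hw t)
      choose g hg using fun t => exists_injOn_fin' (D.χ t) k hk (hw t)
      refine ⟨D.ι, D.T, D.tree, fun v => {p | v ∈ D.χ p.1 ∧ p.2 = g p.1 v}, ?_, ?_, ?_⟩
      · intro v
        refine connected_map' (G := D.T) (fun t => (t, g t v)) (fun t ht => ⟨ht, rfl⟩)
          ?_ ?_ (D.trace_conn v)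
        · intro a ha b hb hab
          exact Or.inr (Or.inl hab)
        · rintro ⟨t, i⟩ ⟨ht, hi⟩
          exact ⟨t, ht, by simp at hi ⊢; omega⟩
      · intro w w' hne
        rw [Set.eq_empty_iff_forall_notMem]
        rintro p ⟨⟨h1, h2⟩, ⟨h3, h4⟩⟩
        exact hne (hg p.1 h1 h3 (h2 ▸ h4))
      · intro u v huv
        obtain ⟨t, t', hc, hu, hv⟩ := D.edge_mem u v huv
        have key : ∀ s s', u ∈ D.χ s → v ∈ D.χ s' → (s = s' ∨ D.T.Adj s s') →
            ∃ p ∈ {p : D.ι × Fin k | u ∈ D.χ p.1 ∧ p.2 = g p.1 u},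
              ∃ q ∈ {p : D.ι × Fin k | v ∈ D.χ p.1 ∧ p.2 = g p.1 v},
              (lexK D.T k).Adj p q := by
          rintro s s' hus hvs (rfl | hadj)
          · exact ⟨(s, g s u), ⟨hus, rfl⟩, (s, g s v), ⟨hvs, rfl⟩,
              Or.inr ⟨rfl, fun h => huv.ne (hg s hus hvs h)⟩⟩
          · exact ⟨(s, g s u), ⟨hus, rfl⟩, (s', g s' v), ⟨hvs, rfl⟩, Or.inl hadj⟩
        rcases hc with rfl | hadj
        · rcases hu with hu | hu <;> rcases hv with hv | hv <;>
            exact key t t hu hv (Or.inl rfl)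
        · rcases hu with hu | hu <;> rcases hv with hv | hv
          · exact key t t hu hv (Or.inl rfl)
          · exact key t t' hu hv (Or.inr hadj)
          · exact key t' t hu hv (Or.inr hadj.symm)
          · exact key t' t' hu hv (Or.inl rfl)
  · rintro ⟨ι, T, htree, μ, hconn, hdisj, hedge⟩
    refine ⟨⟨ι, T, htree, fun t => {v | ∃ i, (t, i) ∈ μ v}, ?_, ?_, ?_⟩, ?_⟩
    · intro v
      obtain ⟨⟨p, hp⟩⟩ := (hconn v).nonempty
      exact ⟨p.1, p.2, hp⟩
    · intro u v huv
      obtain ⟨p, hp, q, hq, hpq⟩ := hedge u v huv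
      refine ⟨p.1, q.1, ?_, Or.inl ⟨p.2, hp⟩, Or.inr ⟨q.2, hq⟩⟩
      rcases hpq with h | ⟨h, _⟩
      · exact Or.inr h
      · exact Or.inl h
    · intro v
      refine connected_map' (G := lexK T k) (Prod.fst) (fun p hp => ⟨p.2, hp⟩)
        ?_ ?_ (hconn v)
      · intro a ha b hb hab
        rcases hab with h | ⟨h, _⟩
        · exact Or.inr h
        · exact Or.inl h
      · rintro t ⟨i, hi⟩
        exact ⟨(t, i), hi, rfl⟩
    · intro t
      rcases Set.eq_empty_or_nonempty {v | ∃ i, (t, i) ∈ μ v} with he | ⟨v0, i0, hv0⟩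
      · simp [he]
      · have : ∀ v : V, ∃ i : Fin k, v ∈ {v | ∃ i, (t, i) ∈ μ v} → (t, i) ∈ μ v := by
          intro v
          by_cases hv : v ∈ {v | ∃ i, (t, i) ∈ μ v}
          · obtain ⟨i, hi⟩ := hv
            exact ⟨i, fun _ => hi⟩
          · exact ⟨i0, fun h => absurd h hv⟩
        choose f hf using this
        have := Set.ncard_le_ncard_of_injOn (s := {v | ∃ i, (t, i) ∈ μ v}) (t := Set.univ) f
          (fun v _ => Set.mem_univ (f v)) ?_ (Set.finite_univ)
        · simpa [Set.ncard_univ] using this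
        · intro a ha b hb hab
          by_contra hne
          have : (t, f a) ∈ μ a ∩ μ b := ⟨hf a ha, hab ▸ hf b hb⟩
          rw [hdisj a b hne] at this
          exact this
end

section
/- For every graph G and k ∈ ℕ, if G has a lenient tree decomposition of width at most k then G has no strict bramble of order greater than k. -/
open SimpleGraph

section HellyAux

variable {ι : Type} {T : SimpleGraph ι}

/-- Convexity in a graph: every path between two members stays inside. -/
def ConvIn (T : SimpleGraph ι) (X : Set ι) : Prop :=
  ∀ ⦃x y : ι⦄, x ∈ X → y ∈ X → ∀ p : T.Walk x y, p.IsPath → ∀ z ∈ p.support, z ∈ X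

lemma convIn_inter {X Y : Set ι} (hX : ConvIn T X) (hY : ConvIn T Y) :
    ConvIn T (X ∩ Y) := fun _ _ hx hy p hp z hz =>
  ⟨hX hx.1 hy.1 p hp z hz, hY hx.2 hy.2 p hp z hz⟩

lemma convIn_of_connected (hT : T.IsTree) {X : Set ι}
    (hX : (T.induce X).Connected) : ConvIn T X := by
  classical
  intro x y hx hy p hp z hz
  obtain ⟨w0⟩ := hX.preconnected ⟨x, hx⟩ ⟨y, hy⟩
  let f : T.induce X →g T := ⟨Subtype.val, fun h => h⟩
  have hpw : p = (w0.map f).bypass :=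
    (hT.existsUnique_path x y).unique hp (w0.map f).bypass_isPath
  rw [hpw] at hz
  have hz' := (w0.map f).support_bypass_subset hz
  rw [SimpleGraph.Walk.support_map] at hz'
  obtain ⟨z', _, rfl⟩ := List.mem_map.1 hz'
  exact z'.2

lemma median_step (hTc : T.Connected) {R Q : Set ι} (hR : ConvIn T R) (hQ : ConvIn T Q)
    {c u v : ι} (hcR : c ∈ R) (hcQ : c ∈ Q) (hu : u ∈ R) (hv : v ∈ Q)
    (huv : T.Adj u v) : (u ∈ R ∧ u ∈ Q) ∨ (v ∈ R ∧ v ∈ Q) := by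
  classical
  obtain ⟨w⟩ := hTc u c
  by_cases hvp : v ∈ (w.toPath : T.Walk u c).support
  · exact Or.inr ⟨hR hu hcR _ w.toPath.2 v hvp, hv⟩
  · left
    refine ⟨hu, hQ hv hcQ (SimpleGraph.Walk.cons huv.symm w.toPath) (w.toPath.2.cons hvp) u ?_⟩
    rw [SimpleGraph.Walk.support_cons]
    exact List.mem_cons_of_mem _ (w.toPath : T.Walk u c).start_mem_support

lemma median_walk (hTc : T.Connected) {R Q : Set ι} (hR : ConvIn T R) (hQ : ConvIn T Q)
    {c : ι} (hcR : c ∈ R) (hcQ : c ∈ Q) :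
    ∀ {a b : ι} (p : T.Walk a b), (∀ z ∈ p.support, z ∈ R ∪ Q) → a ∈ R → b ∈ Q →
    ∃ m ∈ p.support, m ∈ R ∧ m ∈ Q := by
  intro a b p
  induction p with
  | nil =>
    intro _ ha hb
    exact ⟨_, SimpleGraph.Walk.start_mem_support _, ha, hb⟩
  | @cons u v w h p ih =>
    intro hsub hu hb
    have hvRQ : v ∈ R ∪ Q := hsub v (by
      rw [SimpleGraph.Walk.support_cons]
      exact List.mem_cons_of_mem _ p.start_mem_support)
    rcases hvRQ with hvR | hvQ
    · obtain ⟨m, hm, hmRQ⟩ := ih (fun z hz => hsub z (by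
        rw [SimpleGraph.Walk.support_cons]; exact List.mem_cons_of_mem _ hz)) hvR hb
      exact ⟨m, by rw [SimpleGraph.Walk.support_cons]; exact List.mem_cons_of_mem _ hm, hmRQ⟩
    · rcases median_step hTc hR hQ hcR hcQ hu hvQ h with h' | h'
      · exact ⟨u, SimpleGraph.Walk.start_mem_support _, h'⟩
      · exact ⟨v, by
          rw [SimpleGraph.Walk.support_cons]
          exact List.mem_cons_of_mem _ p.start_mem_support, h'⟩

lemma helly3_s9 (hT : T.IsTree) {A B C : Set ι} (hA : ConvIn T A) (hB : ConvIn T B)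
    (hC : ConvIn T C) {a b c : ι} (haA : a ∈ A) (haB : a ∈ B) (hbB : b ∈ B) (hbC : b ∈ C)
    (hcA : c ∈ A) (hcC : c ∈ C) : ∃ m, m ∈ A ∧ m ∈ B ∧ m ∈ C := by
  classical
  have hTc := hT.isConnected
  obtain ⟨w1⟩ := hTc a c
  obtain ⟨w2⟩ := hTc c b
  set w : T.Walk a b := (w1.toPath : T.Walk a c).append (w2.toPath : T.Walk c b) with hw
  have hsub : ∀ z ∈ w.bypass.support, z ∈ A ∪ C := by
    intro z hz
    have hz' := w.support_bypass_subset hz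
    rw [hw, SimpleGraph.Walk.support_append] at hz'
    rcases List.mem_append.1 hz' with h' | h'
    · exact Or.inl (hA haA hcA _ w1.toPath.2 z h')
    · exact Or.inr (hC hcC hbC _ w2.toPath.2 z (List.mem_of_mem_tail h'))
  obtain ⟨m, hm, hmA, hmC⟩ := median_walk hTc hA hC hcA hcC w.bypass hsub haA hbC
  exact ⟨m, hmA, hB haB hbB w.bypass w.bypass_isPath m hm, hmC⟩

lemma helly_trees (hT : T.IsTree) :
    ∀ (n : ℕ) (F : Finset (Set ι)), F.card ≤ n →
    (∀ A ∈ F, ConvIn T A) → (∀ A ∈ F, ∀ A' ∈ F, (A ∩ A').Nonempty) →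
    ∃ m, ∀ A ∈ F, m ∈ A := by
  classical
  intro n
  induction n with
  | zero =>
    intro F hcard _ _
    obtain ⟨m⟩ := hT.isConnected.nonempty
    exact ⟨m, fun A hA => absurd hA (by simp [Finset.card_eq_zero.1 (Nat.le_zero.1 hcard)])⟩
  | succ n ih =>
    intro F hcard hconv hpair
    rcases Finset.eq_empty_or_nonempty F with rfl | ⟨A, hA⟩
    · obtain ⟨m⟩ := hT.isConnected.nonempty
      exact ⟨m, fun A hA => absurd hA (by simp)⟩
    by_cases hsing : ∀ A' ∈ F, A' = A
    · obtain ⟨m, hm⟩ := hpair A hA A hA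
      exact ⟨m, fun A' hA' => (hsing A' hA') ▸ hm.1⟩
    push_neg at hsing
    obtain ⟨B, hB, hBA⟩ := hsing
    set F' : Finset (Set ι) := insert (A ∩ B) ((F.erase A).erase B) with hF'
    have hBe : B ∈ F.erase A := Finset.mem_erase.2 ⟨hBA, hB⟩
    have hcard' : F'.card ≤ n := by
      have h1 : ((F.erase A).erase B).card = F.card - 2 := by
        rw [Finset.card_erase_of_mem hBe, Finset.card_erase_of_mem hA]; omega
      have h3 : F'.card ≤ ((F.erase A).erase B).card + 1 :=
        Finset.card_insert_le _ _
      have h4 : 2 ≤ F.card := Finset.one_lt_card.2 ⟨A, hA, B, hB, fun h => hBA h.symm⟩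
      omega
    have hmemF : ∀ C ∈ (F.erase A).erase B, C ∈ F := fun C hC =>
      Finset.mem_of_mem_erase (Finset.mem_of_mem_erase hC)
    have hABC : ∀ C ∈ F, ((A ∩ B) ∩ C).Nonempty := by
      intro C hC
      obtain ⟨a, haA, haB⟩ := hpair A hA B hB
      obtain ⟨b, hbB, hbC⟩ := hpair B hB C hC
      obtain ⟨c, hcA, hcC⟩ := hpair A hA C hC
      obtain ⟨m, hmA, hmB, hmC⟩ := helly3_s9 hT (hconv A hA) (hconv B hB) (hconv C hC)
        haA haB hbB hbC hcA hcC
      exact ⟨m, ⟨hmA, hmB⟩, hmC⟩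
    have hconv' : ∀ C ∈ F', ConvIn T C := by
      intro C hC
      rcases Finset.mem_insert.1 hC with rfl | hC
      · exact convIn_inter (hconv A hA) (hconv B hB)
      · exact hconv C (hmemF C hC)
    have hpair' : ∀ C ∈ F', ∀ C' ∈ F', (C ∩ C').Nonempty := by
      intro C hC C' hC'
      rcases Finset.mem_insert.1 hC with rfl | hC <;>
        rcases Finset.mem_insert.1 hC' with h' | hC'
      · rw [h']
        obtain ⟨m, hm⟩ := hABC A hA
        exact ⟨m, hm.1, hm.1⟩
      · exact hABC C' (hmemF C' hC')
      · subst h'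
        obtain ⟨m, hm⟩ := hABC C (hmemF C hC)
        exact ⟨m, hm.2, hm.1⟩
      · exact hpair C (hmemF C hC) C' (hmemF C' hC')
    obtain ⟨m, hm⟩ := ih F' hcard' hconv' hpair'
    have hmAB : m ∈ A ∩ B := hm _ (Finset.mem_insert_self _ _)
    refine ⟨m, fun C hC => ?_⟩
    by_cases h1 : C = A
    · exact h1 ▸ hmAB.1
    by_cases h2 : C = B
    · exact h2 ▸ hmAB.2
    · exact hm C (Finset.mem_insert_of_mem
        (Finset.mem_erase.2 ⟨h2, Finset.mem_erase.2 ⟨h1, hC⟩⟩))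

lemma union_connected_of_touch {X Y : Set ι} (hX : (T.induce X).Connected)
    (hY : (T.induce Y).Connected) {p q : ι} (hp : p ∈ X) (hq : q ∈ Y)
    (hpq : p = q ∨ T.Adj p q) : (T.induce (X ∪ Y)).Connected := by
  let homX : T.induce X →g T.induce (X ∪ Y) := ⟨fun x => ⟨x.1, Or.inl x.2⟩, fun h => h⟩
  let homY : T.induce Y →g T.induce (X ∪ Y) := ⟨fun x => ⟨x.1, Or.inr x.2⟩, fun h => h⟩
  have key : (T.induce (X ∪ Y)).Reachable ⟨p, Or.inl hp⟩ ⟨q, Or.inr hq⟩ := by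
    rcases hpq with h | h
    · rw [show (⟨p, Or.inl hp⟩ : ↥(X ∪ Y)) = ⟨q, Or.inr hq⟩ from Subtype.ext h]
    · exact SimpleGraph.Adj.reachable h
  have toP : ∀ a : ↥(X ∪ Y), (T.induce (X ∪ Y)).Reachable a ⟨p, Or.inl hp⟩ := by
    rintro ⟨va, ha | ha⟩
    · exact (hX.preconnected ⟨va, ha⟩ ⟨p, hp⟩).map homX
    · exact ((hY.preconnected ⟨va, ha⟩ ⟨q, hq⟩).map homY).trans key.symm
  haveI : Nonempty ↥(X ∪ Y) := ⟨⟨p, Or.inl hp⟩⟩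
  exact ⟨fun a b => (toP a).trans (toP b).symm⟩

end HellyAux
/-- a lenient tree decomposition of width at most `k` forces every
strict bramble to have order at most `k`. -/
theorem strictBramble_order_le_of_lenientTD {V : Type} [Fintype V]
    (G : SimpleGraph V) (k : ℕ) (h : ∃ D : LenientTD G, D.WidthLE k) :
    ∀ B : Set (Set V), IsStrictBramble G B → brOrder B ≤ k := by
  classical
  obtain ⟨D, hw⟩ := h
  intro B hB
  obtain ⟨hconnB, hpairB⟩ := hB
  have hT := D.tree
  have htraceConv : ∀ v : V, ConvIn D.T {t | v ∈ D.χ t} := fun v =>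
    convIn_of_connected hT (D.trace_conn v)
  set Ts : Set V → Set D.ι := fun S => {t | (D.χ t ∩ S).Nonempty} with hTs
  -- walk along a connected set gives a connected node set containing all relevant traces
  have lemN : ∀ S : Set V, ∀ u u' : ↥S, ∀ _ : (G.induce S).Walk u u',
      ∃ X : Set D.ι, (D.T.induce X).Connected ∧ X ⊆ Ts S ∧
        {t | u.1 ∈ D.χ t} ⊆ X ∧ {t | u'.1 ∈ D.χ t} ⊆ X := by
    intro S u u' q
    induction q with
    | nil =>
      rename_i z
      exact ⟨{t | z.1 ∈ D.χ t}, D.trace_conn z.1,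
        fun t ht => ⟨z.1, ht, z.2⟩, fun t ht => ht, fun t ht => ht⟩
    | @cons x y z hxy q ih =>
      obtain ⟨X', hX'c, hX'sub, hy1, hy2⟩ := ih
      have hG : G.Adj x.1 y.1 := hxy
      obtain ⟨t1, t2, hc, hu, hv⟩ := D.edge_mem x.1 y.1 hG
      obtain ⟨a, ha, b, hb, hab⟩ : ∃ a, x.1 ∈ D.χ a ∧ ∃ b, y.1 ∈ D.χ b ∧
          (a = b ∨ D.T.Adj a b) := by
        rcases hu with hu | hu <;> rcases hv with hv | hv <;> rcases hc with rfl | hc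
        all_goals first
          | exact ⟨_, hu, _, hv, Or.inl rfl⟩
          | exact ⟨_, hu, _, hv, Or.inr hc⟩
          | exact ⟨_, hu, _, hv, Or.inr hc.symm⟩
      refine ⟨{t | x.1 ∈ D.χ t} ∪ X', ?_, ?_, fun t ht => Or.inl ht,
        fun t ht => Or.inr (hy2 ht)⟩
      · exact union_connected_of_touch (D.trace_conn x.1) hX'c ha (hy1 hb) hab
      · rintro t (ht | ht)
        · exact ⟨x.1, ht, x.2⟩
        · exact hX'sub ht
  have hTsConv : ∀ S ∈ B, ConvIn D.T (Ts S) := by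
    intro S hS x y hx hy p hp z hz
    obtain ⟨w, hwx, hwS⟩ := hx
    obtain ⟨w', hw'y, hw'S⟩ := hy
    obtain ⟨q0⟩ := (hconnB S hS).preconnected ⟨w, hwS⟩ ⟨w', hw'S⟩
    obtain ⟨X, hXc, hXsub, h1, h2⟩ := lemN S ⟨w, hwS⟩ ⟨w', hw'S⟩ q0
    exact hXsub (convIn_of_connected hT hXc (h1 hwx) (h2 hw'y) p hp z hz)
  -- the finite family of trace-sets
  have hBfin : (Ts '' B).Finite := Set.Finite.image _ (Set.toFinite B)
  set F : Finset (Set D.ι) := hBfin.toFinset with hF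
  have hmemF : ∀ A, A ∈ F ↔ ∃ S ∈ B, Ts S = A := by
    intro A; rw [hF, Set.Finite.mem_toFinset]; exact Set.mem_image _ _ _
  obtain ⟨m, hm⟩ := helly_trees hT F.card F le_rfl
    (by
      intro A hA
      obtain ⟨S, hS, rfl⟩ := (hmemF A).1 hA
      exact hTsConv S hS)
    (by
      intro A hA A' hA'
      obtain ⟨S, hS, rfl⟩ := (hmemF A).1 hA
      obtain ⟨S', hS', rfl⟩ := (hmemF A').1 hA'
      obtain ⟨v, hv⟩ := hpairB S hS S' hS'
      obtain ⟨t, ht⟩ := D.covers v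
      exact ⟨t, ⟨v, ht, hv.1⟩, ⟨v, ht, hv.2⟩⟩)
  have hcov : Covers (D.χ m) B := by
    intro S hS
    obtain ⟨v, hv1, hv2⟩ := hm (Ts S) ((hmemF (Ts S)).2 ⟨S, hS, rfl⟩)
    exact ⟨v, hv2, hv1⟩
  have h1 : brOrder B ≤ (D.χ m).ncard := Nat.sInf_le ⟨D.χ m, hcov, rfl⟩
  exact h1.trans (hw m)
end
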